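/- Let V be a finite-dimensional real normed vector space and let 𝓗₀ ⊆ 𝓗₁ be two locally finite collections of affine hyperplanes in V (locally finite meaning every point of V has a neighborhood meeting only finitely many members of the collection). Let C be a connected component of V \ ⋃_{H ∈ 𝓗₀} H. Then the closure of C equals the union of the closures of those connected components of V \ ⋃_{H ∈ 𝓗₁} H that are contained in C. -/

import Mathlib

private lemma aux_interior_hyperplane_empty
    {V : Type*} [NormedAddCommGroup V] [NormedSpace ℝ V]
    (f : V →ₗ[ℝ] ℝ) (hf : f ≠ 0) (c : ℝ) : interior {x | f x = c} = ∅ := by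
  by_contra h
  obtain ⟨x, hx⟩ := Set.nonempty_iff_ne_empty.2 h
  obtain ⟨ε, hε, hball⟩ := Metric.isOpen_iff.1 isOpen_interior x hx
  obtain ⟨v, hv⟩ : ∃ v, f v ≠ 0 := by
    by_contra hv
    push_neg at hv
    exact hf (LinearMap.ext fun w => hv w)
  have hv0 : v ≠ 0 := fun h => hv (h ▸ f.map_zero)
  set t : ℝ := ε / (2 * ‖v‖) with ht
  have hnorm : ‖v‖ > 0 := norm_pos_iff.2 hv0
  have htpos : 0 < t := by positivity
  have hmem : x + t • v ∈ Metric.ball x ε := by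
    rw [Metric.mem_ball, dist_eq_norm]
    simp only [add_sub_cancel_left, norm_smul, Real.norm_eq_abs, abs_of_pos htpos]
    rw [ht, div_mul_eq_mul_div, mul_div_assoc]
    have : ‖v‖ / (2 * ‖v‖) = 1/2 := by
      field_simp
    rw [this]; linarith
  have h1 : f (x + t • v) = c :=
    show (x + t • v) ∈ {x | f x = c} from interior_subset (hball hmem)
  have h2 : f (x + t • v) = f x + t * f v := by simp [map_add, map_smul]
  have h3 : f x = c := show x ∈ {x | f x = c} from interior_subset hx
  rw [h2, h3] at h1
  have : t * f v = 0 := by linarith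
  rcases mul_eq_zero.1 this with h | h
  · exact absurd h (ne_of_gt htpos)
  · exact hv h

private lemma aux_interior_union_empty {X : Type*} [TopologicalSpace X]
    {s t : Set X} (hs : IsClosed s) (hsi : interior s = ∅) (hti : interior t = ∅) :
    interior (s ∪ t) = ∅ := by
  have hU : IsOpen (interior (s ∪ t)) := isOpen_interior
  have h1 : interior (s ∪ t) ∩ sᶜ ⊆ t := fun x hx =>
    (interior_subset hx.1).resolve_left hx.2
  have h2 : interior (s ∪ t) ∩ sᶜ ⊆ interior t :=
    ((hU.inter hs.isOpen_compl).subset_interior_iff).2 h1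
  rw [hti] at h2
  have h3 : interior (s ∪ t) ⊆ s := by
    intro x hx
    by_contra hxs
    exact h2 ⟨hx, hxs⟩
  have h4 : interior (s ∪ t) ⊆ interior s := hU.subset_interior_iff.2 h3
  rw [hsi] at h4
  exact Set.eq_empty_iff_forall_notMem.2 fun x hx => h4 hx

private lemma aux_interior_sUnion_empty {X : Type*} [TopologicalSpace X]
    {T : Set (Set X)} (hT : T.Finite)
    (h : ∀ s ∈ T, IsClosed s ∧ interior s = ∅) : interior (⋃₀ T) = ∅ := by
  refine Set.Finite.induction_on (motive := fun T _ => (∀ s ∈ T, IsClosed s ∧ interior s = ∅) →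
      interior (⋃₀ T) = ∅) T hT (fun _ => by simp) ?_ h
  intro a s _ _ ih h'
  rw [Set.sUnion_insert]
  exact aux_interior_union_empty (h' a (Set.mem_insert a s)).1
    (h' a (Set.mem_insert a s)).2 (ih fun t ht => h' t (Set.mem_insert_of_mem a ht))


/-- Let `V` be a finite-dimensional real normed vector space and let
`𝓗₀ ⊆ 𝓗₁` be two locally finite collections of affine hyperplanes in `V` (an affine
hyperplane is a level set `{x | f x = c}` of a nonzero linear functional `f`; local
finiteness means every point has a neighbourhood meeting only finitely many members).
If `C` is a connected component of `V \ ⋃ 𝓗₀`, then the closure of `C` equals the union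
of the closures of those connected components of `V \ ⋃ 𝓗₁` that are contained in `C`. -/
theorem closure_component_eq_union_closure_components
    {V : Type*} [NormedAddCommGroup V] [NormedSpace ℝ V] [FiniteDimensional ℝ V]
    (𝓗₀ 𝓗₁ : Set (Set V)) (hsub : 𝓗₀ ⊆ 𝓗₁)
    (hhyperplane : ∀ H ∈ 𝓗₁, ∃ (f : V →ₗ[ℝ] ℝ) (c : ℝ), f ≠ 0 ∧ H = {x | f x = c})
    (hlf₀ : ∀ x : V, ∃ U ∈ nhds x, {H ∈ 𝓗₀ | (H ∩ U).Nonempty}.Finite)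
    (hlf₁ : ∀ x : V, ∃ U ∈ nhds x, {H ∈ 𝓗₁ | (H ∩ U).Nonempty}.Finite)
    (C : Set V) (hC : ∃ x ∈ (⋃₀ 𝓗₀)ᶜ, C = connectedComponentIn (⋃₀ 𝓗₀)ᶜ x) :
    closure C =
      ⋃ B ∈ {B : Set V |
        (∃ x ∈ (⋃₀ 𝓗₁)ᶜ, B = connectedComponentIn (⋃₀ 𝓗₁)ᶜ x) ∧ B ⊆ C}, closure B := by
  classical
  obtain ⟨x₀, hx₀, hCdef⟩ := hC
  set A₀ := ⋃₀ 𝓗₀ with hA₀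
  set A₁ := ⋃₀ 𝓗₁ with hA₁def
  set S := {B : Set V | (∃ x ∈ A₁ᶜ, B = connectedComponentIn A₁ᶜ x) ∧ B ⊆ C} with hSdef
  choose! f c hf hHeq using hhyperplane
  -- basic facts
  have hclosed : ∀ H ∈ 𝓗₁, IsClosed H := by
    intro H hH
    rw [hHeq H hH]
    exact isClosed_eq (f H).continuous_of_finiteDimensional continuous_const
  have hintH : ∀ H ∈ 𝓗₁, interior H = ∅ := by
    intro H hH
    rw [hHeq H hH]
    exact aux_interior_hyperplane_empty (f H) (hf H hH) (c H)
  have hA₀closed : IsClosed A₀ := by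
    have hlf : LocallyFinite (fun H : ↥𝓗₀ => (H : Set V)) := by
      intro x
      obtain ⟨U, hU, hfin⟩ := hlf₀ x
      refine ⟨U, hU, ?_⟩
      have heq : {i : ↥𝓗₀ | ((i : Set V) ∩ U).Nonempty}
          = Subtype.val ⁻¹' {H ∈ 𝓗₀ | (H ∩ U).Nonempty} := by
        ext i; simp [i.2]
      rw [heq]
      exact hfin.preimage Subtype.val_injective.injOn
    rw [hA₀, Set.sUnion_eq_iUnion]
    exact hlf.isClosed_iUnion fun i => hclosed _ (hsub i.2)
  have hA₁closed : IsClosed A₁ := by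
    have hlf : LocallyFinite (fun H : ↥𝓗₁ => (H : Set V)) := by
      intro x
      obtain ⟨U, hU, hfin⟩ := hlf₁ x
      refine ⟨U, hU, ?_⟩
      have heq : {i : ↥𝓗₁ | ((i : Set V) ∩ U).Nonempty}
          = Subtype.val ⁻¹' {H ∈ 𝓗₁ | (H ∩ U).Nonempty} := by
        ext i; simp [i.2]
      rw [heq]
      exact hfin.preimage Subtype.val_injective.injOn
    rw [hA₁def, Set.sUnion_eq_iUnion]
    exact hlf.isClosed_iUnion fun i => hclosed _ i.2
  have hopen₀ : IsOpen A₀ᶜ := hA₀closed.isOpen_compl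
  have hCopen : IsOpen C := hCdef ▸ hopen₀.connectedComponentIn
  have hcompl : A₁ᶜ ⊆ A₀ᶜ := Set.compl_subset_compl.2 (Set.sUnion_mono hsub)
  -- membership criterion for S
  have hmemS : ∀ y, y ∈ C → y ∉ A₁ →
      connectedComponentIn A₁ᶜ y ∈ S ∧ y ∈ connectedComponentIn A₁ᶜ y := by
    intro y hyC hyA
    have hy' : y ∈ A₁ᶜ := hyA
    refine ⟨⟨⟨y, hy', rfl⟩, ?_⟩, mem_connectedComponentIn hy'⟩
    have hCy : C = connectedComponentIn A₀ᶜ y :=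
      hCdef.trans (connectedComponentIn_eq (hCdef ▸ hyC))
    rw [hCy]
    exact isPreconnected_connectedComponentIn.subset_connectedComponentIn
      (mem_connectedComponentIn hy') ((connectedComponentIn_subset _ _).trans hcompl)
  -- sign-constancy on components
  have hsign : ∀ (B : Set V), (∃ w ∈ A₁ᶜ, B = connectedComponentIn A₁ᶜ w) →
      ∀ H ∈ 𝓗₁, ∀ y ∈ B, ∀ z ∈ B, (f H y < c H ↔ f H z < c H) := by
    rintro B ⟨w, hw, rfl⟩ H hH y hy z hz
    have hopenlt : IsOpen {v : V | f H v < c H} :=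
      isOpen_lt (f H).continuous_of_finiteDimensional continuous_const
    have hopengt : IsOpen {v : V | c H < f H v} :=
      isOpen_lt continuous_const (f H).continuous_of_finiteDimensional
    have hdisj : Disjoint {v : V | f H v < c H} {v : V | c H < f H v} :=
      Set.disjoint_left.2 fun v (hv1 : f H v < c H) (hv2 : c H < f H v) => lt_asymm hv1 hv2
    have hBsub : connectedComponentIn A₁ᶜ w ⊆
        {v : V | f H v < c H} ∪ {v : V | c H < f H v} := by
      intro p hp
      have hpA : p ∈ A₁ᶜ := connectedComponentIn_subset _ _ hp
      have hpH : p ∉ H := fun hpH => hpA ⟨H, hH, hpH⟩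
      rw [hHeq H hH] at hpH
      exact (lt_or_gt_of_ne hpH).imp id id
    rcases isPreconnected_connectedComponentIn.subset_or_subset hopenlt hopengt hdisj hBsub with
      h | h
    · exact ⟨fun _ => h hz, fun _ => h hy⟩
    · exact ⟨fun hlt => absurd (h hy) (not_lt.2 hlt.le), fun hlt => absurd (h hz) (not_lt.2 hlt.le)⟩
  -- local finiteness of the components of A₁ᶜ
  have hlf_comp : ∀ x : V, ∃ ε > 0,
      {B : Set V | (∃ y ∈ A₁ᶜ, B = connectedComponentIn A₁ᶜ y) ∧
        (B ∩ Metric.ball x ε).Nonempty}.Finite := by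
    intro x
    obtain ⟨U, hU, hTfin⟩ := hlf₁ x
    obtain ⟨ε, hε, hball⟩ := Metric.mem_nhds_iff.1 hU
    refine ⟨ε, hε, ?_⟩
    set T := {H ∈ 𝓗₁ | (H ∩ U).Nonempty} with hTdef
    haveI : Finite ↥T := hTfin.to_subtype
    set σ : Set V → (↥T → Prop) := fun B => fun H =>
      ∃ y, y ∈ B ∩ Metric.ball x ε ∧ f (H : Set V) y < c (H : Set V) with hσdef
    have hinj : Set.InjOn σ {B : Set V | (∃ y ∈ A₁ᶜ, B = connectedComponentIn A₁ᶜ y) ∧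
        (B ∩ Metric.ball x ε).Nonempty} := by
      rintro B ⟨hBcomp, ⟨y, hyB, hyball⟩⟩ B' ⟨hB'comp, ⟨y', hy'B, hy'ball⟩⟩ hσ
      have hyA : y ∈ A₁ᶜ := by
        obtain ⟨w, hw, rfl⟩ := hBcomp
        exact connectedComponentIn_subset _ _ hyB
      have hy'A : y' ∈ A₁ᶜ := by
        obtain ⟨w, hw, rfl⟩ := hB'comp
        exact connectedComponentIn_subset _ _ hy'B
      have hBeq : B = connectedComponentIn A₁ᶜ y := by
        obtain ⟨w, hw, rfl⟩ := hBcomp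
        exact connectedComponentIn_eq hyB
      have hB'eq : B' = connectedComponentIn A₁ᶜ y' := by
        obtain ⟨w, hw, rfl⟩ := hB'comp
        exact connectedComponentIn_eq hy'B
      have hsegball : segment ℝ y y' ⊆ Metric.ball x ε :=
        (convex_ball x ε).segment_subset hyball hy'ball
      have hseg : segment ℝ y y' ⊆ A₁ᶜ := by
        intro z hz
        rintro ⟨H, hH, hzH⟩
        have hHT : H ∈ T := ⟨hH, z, hzH, hball (hsegball hz)⟩
        have hyH : f H y ≠ c H := by
          have : y ∉ H := fun h => hyA ⟨H, hH, h⟩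
          rwa [hHeq H hH] at this
        have hy'H : f H y' ≠ c H := by
          have : y' ∉ H := fun h => hy'A ⟨H, hH, h⟩
          rwa [hHeq H hH] at this
        have hzc : f H z = c H := by
          have := hzH
          rwa [hHeq H hH] at this
        have hiff : f H y < c H ↔ f H y' < c H := by
          have hσH := congrFun hσ ⟨H, hHT⟩
          constructor
          · intro h
            have h1 : σ B ⟨H, hHT⟩ := ⟨y, ⟨hyB, hyball⟩, h⟩
            obtain ⟨p, hp, hplt⟩ := hσH ▸ h1
            exact (hsign B' hB'comp H hH p hp.1 y' hy'B).1 hplt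
          · intro h
            have h1 : σ B' ⟨H, hHT⟩ := ⟨y', ⟨hy'B, hy'ball⟩, h⟩
            obtain ⟨p, hp, hplt⟩ := hσH.symm ▸ h1
            exact (hsign B hBcomp H hH p hp.1 y hyB).1 hplt
        rcases lt_or_gt_of_ne hyH with h | h
        · have hz' : z ∈ {v : V | f H v < c H} :=
            convex_halfSpace_lt (f H).isLinear (c H) |>.segment_subset h (hiff.1 h) hz
          exact absurd hzc (ne_of_lt hz')
        · have hy'gt : c H < f H y' :=
            (lt_or_gt_of_ne hy'H).resolve_left fun hl => (not_lt.2 h.le) (hiff.2 hl)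
          have hz' : z ∈ {v : V | c H < f H v} :=
            convex_halfSpace_gt (f H).isLinear (c H) |>.segment_subset h hy'gt hz
          exact absurd hzc.symm (ne_of_lt hz')
      have hy'mem : y' ∈ connectedComponentIn A₁ᶜ y :=
        (convex_segment y y').isPreconnected.subset_connectedComponentIn
          (left_mem_segment ℝ y y') hseg (right_mem_segment ℝ y y')
      rw [hBeq, hB'eq, connectedComponentIn_eq hy'mem]
    exact Set.Finite.of_finite_image (Set.toFinite _) hinj
  -- density: every point of C is a closure point of ⋃₀ S
  have hdense : ∀ p ∈ C, ∀ O : Set V, IsOpen O → p ∈ O →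
      ∃ y B, B ∈ S ∧ y ∈ B ∧ y ∈ O := by
    intro p hp O hO hpO
    obtain ⟨U, hU, hTfin⟩ := hlf₁ p
    have hmem : O ∩ C ∩ U ∈ nhds p :=
      Filter.inter_mem (Filter.inter_mem (hO.mem_nhds hpO) (hCopen.mem_nhds hp)) hU
    obtain ⟨ε, hε, hball⟩ := Metric.mem_nhds_iff.1 hmem
    set T := {H ∈ 𝓗₁ | (H ∩ U).Nonempty} with hTdef
    have hint : interior (⋃₀ T) = ∅ :=
      aux_interior_sUnion_empty hTfin fun s hs => ⟨hclosed s hs.1, hintH s hs.1⟩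
    have hnotsub : ¬ Metric.ball p ε ⊆ ⋃₀ T := by
      intro hsub'
      have h1 : Metric.ball p ε ⊆ interior (⋃₀ T) :=
        Metric.isOpen_ball.subset_interior_iff.2 hsub'
      rw [hint] at h1
      exact absurd (h1 (Metric.mem_ball_self hε)) (Set.notMem_empty p)
    obtain ⟨y, hyball, hyT⟩ := Set.not_subset.1 hnotsub
    have hyA : y ∉ A₁ := by
      rintro ⟨H, hH, hyH⟩
      exact hyT ⟨H, ⟨hH, y, hyH, (hball hyball).2⟩, hyH⟩
    have hyC : y ∈ C := (hball hyball).1.2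
    obtain ⟨hBS, hyB⟩ := hmemS y hyC hyA
    exact ⟨y, connectedComponentIn A₁ᶜ y, hBS, hyB, (hball hyball).1.1⟩
  -- assemble
  apply Set.Subset.antisymm
  · have hLF : LocallyFinite (fun B : ↥S => (B : Set V)) := by
      intro x
      obtain ⟨ε, hε, hfin⟩ := hlf_comp x
      refine ⟨Metric.ball x ε, Metric.ball_mem_nhds x hε, ?_⟩
      have hss : {i : ↥S | ((i : Set V) ∩ Metric.ball x ε).Nonempty} ⊆
          Subtype.val ⁻¹' {B : Set V | (∃ y ∈ A₁ᶜ, B = connectedComponentIn A₁ᶜ y) ∧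
            (B ∩ Metric.ball x ε).Nonempty} := fun i hi => ⟨i.2.1, hi⟩
      exact ((hfin.preimage Subtype.val_injective.injOn).subset hss)
    have h1 : C ⊆ closure (⋃ i : ↥S, (i : Set V)) := by
      intro p hp
      rw [mem_closure_iff]
      intro O hO hpO
      obtain ⟨y, B, hBS, hyB, hyO⟩ := hdense p hp O hO hpO
      exact ⟨y, hyO, Set.mem_iUnion.2 ⟨⟨B, hBS⟩, hyB⟩⟩
    have h2 : closure C ⊆ ⋃ i : ↥S, closure (i : Set V) := by
      rw [← hLF.closure_iUnion]
      exact (closure_mono h1).trans (by rw [closure_closure])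
    rw [Set.biUnion_eq_iUnion]
    exact h2
  · exact Set.iUnion₂_subset fun B hB => closure_mono hB.2
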